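/- Let $X_1, \dots, X_N$ be independent nonnegative real random variables such that each $X_i$ has a density bounded by $A x^{-\alpha}$ for some $A > 0$ and $0 \le \alpha < 1$. Then for every $\varepsilon > 0$, $\mathbb{P}\{X_1 + \dots + X_N \le N\varepsilon\} \le [C(A,\alpha)\varepsilon]^{(1-\alpha)N}$, where $C(A,\alpha) = \frac{e}{1-\alpha}[A\Gamma(1-\alpha)]^{1/(1-\alpha)}$. -/

import Mathlib

open MeasureTheory


open MeasureTheory Set Real

lemma gamma_scaled_integrable {s t : ℝ} (hs : 0 < s) (ht : 0 < t) :
    IntegrableOn (fun x : ℝ => Real.exp (-(t * x)) * x ^ (s - 1)) (Ioi 0) := by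
  have h := (integrableOn_Ioi_comp_mul_left_iff
      (fun x : ℝ => Real.exp (-x) * x ^ (s - 1)) 0 ht).mpr
    (by simpa using Real.GammaIntegral_convergent hs)
  have h' : IntegrableOn (fun x : ℝ => t ^ (s-1) * (Real.exp (-(t * x)) * x ^ (s - 1)))
      (Ioi 0) := by
    refine h.congr_fun (fun x hx => ?_) measurableSet_Ioi
    dsimp only; rw [Real.mul_rpow ht.le (le_of_lt hx)]
    ring
  have := h'.integrable.smul (c := (t ^ (s-1))⁻¹)
  refine Integrable.congr this (Filter.Eventually.of_forall fun x => ?_)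
  simp [smul_eq_mul, ← mul_assoc, inv_mul_cancel₀ (ne_of_gt (Real.rpow_pos_of_pos ht (s-1)))]

lemma gamma_scaled {s t : ℝ} (hs : 0 < s) (ht : 0 < t) :
    ∫ x in Ioi (0:ℝ), Real.exp (-(t * x)) * x ^ (s - 1)
      = Real.Gamma s * t ^ (-s) := by
  have h := integral_comp_mul_left_Ioi (fun x : ℝ => Real.exp (-x) * x ^ (s - 1)) 0 ht
  rw [mul_zero] at h
  have h2 : ∫ x in Ioi (0:ℝ), Real.exp (-(t * x)) * (t * x) ^ (s - 1)
      = t⁻¹ * Real.Gamma s := by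
    rw [Real.Gamma_eq_integral hs, ← smul_eq_mul, ← h]
  have h3 : ∫ x in Ioi (0:ℝ), Real.exp (-(t * x)) * (t * x) ^ (s - 1)
      = t ^ (s - 1) * ∫ x in Ioi (0:ℝ), Real.exp (-(t * x)) * x ^ (s - 1) := by
    rw [← integral_const_mul]
    refine setIntegral_congr_fun measurableSet_Ioi (fun x hx => ?_)
    rw [Real.mul_rpow ht.le (le_of_lt hx)]; ring
  rw [h3] at h2
  have hts : t ^ (s - 1) * t = t ^ s := by
    rw [← Real.rpow_add_one ht.ne' (s-1)]; ring_nf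
  have h4 : t ^ s * ∫ x in Ioi (0:ℝ), Real.exp (-(t * x)) * x ^ (s - 1) = Real.Gamma s := by
    rw [← hts]
    field_simp at h2
    linarith [h2]
  have hts' : (0:ℝ) < t ^ s := Real.rpow_pos_of_pos ht _
  rw [Real.rpow_neg ht.le]
  field_simp
  linarith [h4]
open scoped ENNReal NNReal

lemma mgf_density_bound {Ω : Type*} [MeasureSpace Ω] (μ : Measure Ω)
    [IsProbabilityMeasure μ] (X : Ω → ℝ) (hX : Measurable X)
    (A α t : ℝ) (hA : 0 < A) (hα1 : α < 1) (f : ℝ → ℝ)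
    (hf0 : ∀ x, 0 ≤ f x) (hfb : ∀ x : ℝ, 0 < x → f x ≤ A * x ^ (-α))
    (hdens : ∀ s : Set ℝ, MeasurableSet s →
      μ (X ⁻¹' s) = ENNReal.ofReal (∫ x in s ∩ Set.Ici (0:ℝ), f x))
    (ht : 0 < t) :
    ProbabilityTheory.mgf X μ (-t) ≤ A * Real.Gamma (1 - α) * t ^ (α - 1) := by
  have h1 : (1 : ℝ≥0∞) = ENNReal.ofReal (∫ x in Ici (0:ℝ), f x) := by
    have := hdens univ MeasurableSet.univ
    simpa [Set.univ_inter] using this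
  have hfi : IntegrableOn f (Ici (0:ℝ)) := by
    by_contra hc
    rw [integral_undef hc] at h1
    simp at h1
  -- the law of X is f·Lebesgue on [0,∞)
  have hind_meas : AEStronglyMeasurable ((Ici (0:ℝ)).indicator f) volume :=
    (aestronglyMeasurable_indicator_iff measurableSet_Ici).mpr hfi.1
  have hmap : Measure.map X μ =
      volume.withDensity (fun x => ENNReal.ofReal ((Ici (0:ℝ)).indicator f x)) := by
    ext s hs
    rw [Measure.map_apply hX hs, hdens s hs, withDensity_apply _ hs]
    symm
    have heq : ∀ x, ENNReal.ofReal ((Ici (0:ℝ)).indicator f x)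
        = (Ici (0:ℝ)).indicator (fun x => ENNReal.ofReal (f x)) x := by
      intro x; by_cases hx : x ∈ Ici (0:ℝ) <;> simp [hx]
    calc ∫⁻ x in s, ENNReal.ofReal ((Ici (0:ℝ)).indicator f x)
        = ∫⁻ x in s, (Ici (0:ℝ)).indicator (fun x => ENNReal.ofReal (f x)) x := by
          simp_rw [heq]
      _ = ∫⁻ x in s ∩ Ici (0:ℝ), ENNReal.ofReal (f x) := by
          rw [lintegral_indicator measurableSet_Ici, Measure.restrict_restrict measurableSet_Ici,
            Set.inter_comm]
      _ = ENNReal.ofReal (∫ x in s ∩ Ici (0:ℝ), f x) := by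
          rw [ofReal_integral_eq_lintegral_ofReal
            (hfi.mono_set Set.inter_subset_right)
            (Filter.Eventually.of_forall fun x => hf0 x)]
  -- rewrite the mgf as an integral against the density
  have hmgf : ProbabilityTheory.mgf X μ (-t)
      = ∫ x in Ici (0:ℝ), f x * Real.exp (-t * x) := by
    rw [ProbabilityTheory.mgf]
    have hcont : Continuous (fun x : ℝ => Real.exp (-t * x)) := by continuity
    rw [show (∫ ω, Real.exp (-t * X ω) ∂μ) = ∫ x, Real.exp (-t * x) ∂(Measure.map X μ) from
      (integral_map hX.aemeasurable hcont.aestronglyMeasurable).symm, hmap]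
    have hnn : AEMeasurable (fun x => ((Ici (0:ℝ)).indicator f x).toNNReal) volume :=
      measurable_real_toNNReal.comp_aemeasurable hind_meas.aemeasurable
    rw [show (fun x => ENNReal.ofReal ((Ici (0:ℝ)).indicator f x))
        = (fun x => (((Ici (0:ℝ)).indicator f x).toNNReal : ℝ≥0∞)) from rfl,
      integral_withDensity_eq_integral_smul₀ hnn]
    rw [← integral_indicator measurableSet_Ici]
    congr 1
    ext x
    by_cases hx : x ∈ Ici (0:ℝ)
    · simp [hx, NNReal.smul_def, Real.coe_toNNReal _ (hf0 x)]
    · simp [hx]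
  rw [hmgf, integral_Ici_eq_integral_Ioi]
  have hs1 : (0:ℝ) < 1 - α := by linarith
  have hupInt : IntegrableOn (fun x : ℝ => A * (Real.exp (-(t*x)) * x ^ ((1-α) - 1)))
      (Ioi 0) := (gamma_scaled_integrable hs1 ht).const_mul A
  have hloInt : IntegrableOn (fun x : ℝ => f x * Real.exp (-t * x)) (Ioi 0) := by
    refine Integrable.mono (hfi.mono_set Ioi_subset_Ici_self)
      (hfi.1.mono_set Ioi_subset_Ici_self |>.mul
        ((by continuity : Continuous (fun x : ℝ => Real.exp (-t * x))).aestronglyMeasurable)) ?_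
    refine (ae_restrict_iff' measurableSet_Ioi).mpr (Filter.Eventually.of_forall fun x hx => ?_)
    have hx0 : (0:ℝ) < x := hx
    rw [Real.norm_eq_abs, Real.norm_eq_abs, abs_of_nonneg (hf0 x),
      abs_of_nonneg (mul_nonneg (hf0 x) (Real.exp_nonneg _))]
    nlinarith [Real.exp_le_one_iff.mpr (by nlinarith : -t * x ≤ 0), hf0 x,
      Real.exp_nonneg (-t * x)]
  have hmono : ∫ x in Ioi (0:ℝ), f x * Real.exp (-t * x)
      ≤ ∫ x in Ioi (0:ℝ), A * (Real.exp (-(t*x)) * x ^ ((1-α) - 1)) := by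
    refine setIntegral_mono_on hloInt hupInt measurableSet_Ioi fun x hx => ?_
    have hx0 : (0:ℝ) < x := hx
    have : f x ≤ A * x ^ (-α) := hfb x hx0
    have hxe : x ^ ((1-α) - 1) = x ^ (-α) := by norm_num
    rw [hxe, show -t * x = -(t*x) by ring]
    calc f x * Real.exp (-(t*x)) ≤ (A * x ^ (-α)) * Real.exp (-(t*x)) :=
          mul_le_mul_of_nonneg_right this (Real.exp_nonneg _)
      _ = A * (Real.exp (-(t*x)) * x ^ (-α)) := by ring
  refine hmono.trans ?_
  rw [integral_const_mul, gamma_scaled hs1 ht]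
  have : -(1-α) = α - 1 := by ring
  rw [this, mul_assoc]
/-- Lemma 5: if `X₁, …, X_N` are independent nonnegative random
variables whose densities are bounded by `A x^{-α}` (`A > 0`, `0 ≤ α < 1`), then
`P{X₁ + ⋯ + X_N ≤ Nε} ≤ [C(A,α) ε]^{(1-α)N}` with
`C(A,α) = (e/(1-α)) [A Γ(1-α)]^{1/(1-α)}`. -/
theorem small_sum_probability_bound {Ω : Type*} [MeasureSpace Ω] (μ : Measure Ω)
    [IsProbabilityMeasure μ] (N : ℕ) (hN : 1 ≤ N) (X : Fin N → Ω → ℝ)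
    (hXmeas : ∀ i, Measurable (X i)) (hXpos : ∀ i ω, 0 ≤ X i ω)
    (hindep : ProbabilityTheory.iIndepFun (m := fun _ => inferInstance) X μ)
    (A α : ℝ) (hA : 0 < A) (hα0 : 0 ≤ α) (hα1 : α < 1) (f : Fin N → ℝ → ℝ)
    (hf0 : ∀ i x, 0 ≤ f i x) (hfbound : ∀ i, ∀ x : ℝ, 0 < x → f i x ≤ A * x ^ (-α))
    (hdens : ∀ i, ∀ s : Set ℝ, MeasurableSet s →
      μ (X i ⁻¹' s) = ENNReal.ofReal (∫ x in s ∩ Set.Ici (0 : ℝ), f i x))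
    (ε : ℝ) (hε : 0 < ε) :
    μ {ω | ∑ i, X i ω ≤ N * ε} ≤
      ENNReal.ofReal
        ((Real.exp 1 / (1 - α) * (A * Real.Gamma (1 - α)) ^ ((1 : ℝ) / (1 - α)) * ε)
          ^ ((1 - α) * N)) := by
  have hc : (0:ℝ) < 1 - α := by linarith
  set c : ℝ := 1 - α with hc_def
  set t : ℝ := c / ε with ht_def
  have ht : 0 < t := div_pos hc hε
  set G : ℝ := A * Real.Gamma c with hG_def
  have hG : 0 < G := mul_pos hA (Real.Gamma_pos_of_pos hc)
  set K : ℝ := A * Real.Gamma c * t ^ (α - 1) with hK_def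
  have hK : 0 < K := mul_pos hG (Real.rpow_pos_of_pos ht _)
  -- Chernoff bound
  have hSint : Integrable (fun ω => Real.exp (-t * (∑ i, X i) ω)) μ := by
    refine Integrable.mono' (integrable_const 1)
      ((by fun_prop : Measurable fun ω => Real.exp (-t * (∑ i, X i) ω)).aestronglyMeasurable)
      (Filter.Eventually.of_forall fun ω => ?_)
    rw [Real.norm_eq_abs, abs_of_nonneg (Real.exp_nonneg _)]
    refine Real.exp_le_one_iff.mpr ?_
    have hs : 0 ≤ (∑ i, X i) ω := by
      rw [Finset.sum_apply]
      exact Finset.sum_nonneg fun i _ => hXpos i ω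
    nlinarith
  have hchern := ProbabilityTheory.measure_le_le_exp_mul_mgf (μ := μ) (X := ∑ i, X i)
    (t := -t) (N * ε) (by linarith) hSint
  have hmgfsum := hindep.mgf_sum hXmeas (t := -t) Finset.univ
  have hprod : ∏ i, ProbabilityTheory.mgf (X i) μ (-t) ≤ K ^ N := by
    calc ∏ i, ProbabilityTheory.mgf (X i) μ (-t) ≤ ∏ _i : Fin N, K :=
          Finset.prod_le_prod (fun i _ => ProbabilityTheory.mgf_nonneg)
            (fun i _ => mgf_density_bound μ (X i) (hXmeas i) A α t hA hα1 (f i)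
              (hf0 i) (hfbound i) (hdens i) ht)
      _ = K ^ N := by simp
  have hreal : (μ {ω | ∑ i, X i ω ≤ N * ε}).toReal ≤ Real.exp (t * (N * ε)) * K ^ N := by
    have hset : {ω | ∑ i, X i ω ≤ N * ε} = {ω | (∑ i, X i) ω ≤ N * ε} := by
      ext ω; simp [Finset.sum_apply]
    rw [hset]
    refine hchern.trans ?_
    rw [neg_neg, hmgfsum]
    exact mul_le_mul_of_nonneg_left hprod (Real.exp_nonneg _)
  -- arithmetic: identify the bound with the stated constant
  set b : ℝ := Real.exp 1 / c * G ^ ((1:ℝ) / c) * ε with hb_def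
  have hb : 0 < b := by positivity
  have hbc : b ^ c = Real.exp c / c ^ c * G * ε ^ c := by
    rw [hb_def, Real.mul_rpow (by positivity) hε.le,
      Real.mul_rpow (by positivity) (by positivity),
      Real.div_rpow (Real.exp_nonneg 1) hc.le, Real.exp_one_rpow,
      ← Real.rpow_mul hG.le, one_div_mul_cancel hc.ne', Real.rpow_one]
  have hKeq : Real.exp c * K = b ^ c := by
    have h1 : t ^ (α - 1) = ε ^ c / c ^ c := by
      rw [ht_def, show α - 1 = -c by rw [hc_def]; ring, Real.rpow_neg (by positivity),
        Real.div_rpow hc.le hε.le]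
      rw [inv_div]
    rw [hbc, hK_def, h1, ← hG_def]
    ring
  have hfinal : Real.exp (t * (N * ε)) * K ^ N = b ^ (c * N) := by
    have htN : t * (N * ε) = c * N := by
      rw [ht_def]; field_simp
    rw [htN, Real.rpow_mul hb.le, Real.rpow_natCast, mul_comm c (N:ℝ),
      Real.exp_nat_mul, ← mul_pow, hKeq]
  calc μ {ω | ∑ i, X i ω ≤ N * ε}
      = ENNReal.ofReal ((μ {ω | ∑ i, X i ω ≤ N * ε}).toReal) :=
        (ENNReal.ofReal_toReal (measure_ne_top μ _)).symm
    _ ≤ ENNReal.ofReal (Real.exp (t * (N * ε)) * K ^ N) := ENNReal.ofReal_le_ofReal hreal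
    _ = ENNReal.ofReal (b ^ (c * N)) := by rw [hfinal]
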